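/- Correctness of Antimirov's construction (one direction): for every regular expression e over α, the language of e is contained in the language accepted by the Antimirov automaton of e. Concretely, if w ∈ matches' e then w is accepted by the NFA whose states are regular expressions over α, whose transition function is the Antimirov derivative ∂, whose initial states are ι(e), and whose accepting states are the nullable expressions. -/

import Mathlib

/-- The Antimirov derivative of a regular expression with respect to a letter. -/
def aderiv {α : Type*} : RegularExpression α → α → Set (RegularExpression α)
  | .zero, _ => ∅
  | .epsilon, _ => ∅
  | .char b, a => {f | a = b ∧ f = 1}
  | .plus e f, a => aderiv e a ∪ aderiv f a
  | .comp e f, a =>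
      (fun e' => e' * f) '' aderiv e a ∪ {f' | f' ∈ aderiv f a ∧ [] ∈ e.matches'}
  | .star e, a => (fun e' => e' * e.star) '' aderiv e a

/-- The initial states of the Antimirov automaton of a regular expression. -/
def ini {α : Type*} : RegularExpression α → Set (RegularExpression α)
  | .zero => ∅
  | .epsilon => {1}
  | .char a => {RegularExpression.char a}
  | .plus e f => ini e ∪ ini f
  | .comp e f => (fun e' => e' * f) '' ini e
  | .star e => (fun e' => e' * e.star) '' ini e ∪ {1}

/-- The Antimirov automaton of `e`: states are regular expressions, transitions are Antimirov
derivatives, initial states are `ι(e)`, and accepting states are the nullable expressions. -/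
def antimirovNFA {α : Type*} (e : RegularExpression α) : NFA α (RegularExpression α) where
  step := fun e' a => aderiv e' a
  start := ini e
  accept := {f | [] ∈ f.matches'}

lemma star_cons_aux {α : Type*} {l : Language α} (L : List (List α)) :
    ∀ {a : α} {w : List α}, a :: w = L.flatten → (∀ y ∈ L, y ∈ l) →
    ∃ u v, (a :: u) ∈ l ∧ v ∈ KStar.kstar l ∧ w = u ++ v := by
  induction L with
  | nil => intro a w hL _; simp at hL
  | cons x L ih =>
    intro a w hL hmem
    rcases x with _ | ⟨b, x⟩
    · exact ih hL (fun y hy => hmem y (List.mem_cons_of_mem _ hy))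
    · simp only [List.flatten_cons, List.cons_append, List.cons.injEq] at hL
      obtain ⟨rfl, rfl⟩ := hL
      exact ⟨x, L.flatten, hmem _ List.mem_cons_self,
        Language.join_mem_kstar (fun y hy => hmem y (List.mem_cons_of_mem _ hy)), rfl⟩

lemma star_cons {α : Type*} {l : Language α} {a : α} {w : List α} (h : a :: w ∈ KStar.kstar l) :
    ∃ u v, (a :: u) ∈ l ∧ v ∈ KStar.kstar l ∧ w = u ++ v := by
  obtain ⟨L, hL, hmem⟩ := Language.mem_kstar.1 h
  exact star_cons_aux L hL hmem

lemma aderiv_sound {α : Type*} (f : RegularExpression α) (a : α) (w : List α)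
    (h : a :: w ∈ f.matches') : ∃ g ∈ aderiv f a, w ∈ g.matches' := by
  induction f generalizing w with
  | zero => simp [RegularExpression.matches'] at h
  | epsilon => simp [RegularExpression.matches'] at h
  | char b =>
    simp [RegularExpression.matches'] at h
    obtain ⟨rfl, rfl⟩ := h
    exact ⟨1, ⟨rfl, rfl⟩, by simp [RegularExpression.matches']⟩
  | plus e f ihe ihf =>
    rcases (show a :: w ∈ e.matches' ∨ a :: w ∈ f.matches' from h) with h | h
    · obtain ⟨g, hg, hw⟩ := ihe _ h
      exact ⟨g, Or.inl hg, hw⟩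
    · obtain ⟨g, hg, hw⟩ := ihf _ h
      exact ⟨g, Or.inr hg, hw⟩
  | comp e f ihe ihf =>
    rw [RegularExpression.comp_def, RegularExpression.matches'_mul, Language.mem_mul] at h
    obtain ⟨u, hu, v, hv, huv⟩ := h
    rcases u with _ | ⟨b, u⟩
    · subst huv
      obtain ⟨g, hg, hw⟩ := ihf _ hv
      exact ⟨g, Or.inr ⟨hg, hu⟩, hw⟩
    · simp only [List.cons_append, List.cons.injEq] at huv
      obtain ⟨rfl, rfl⟩ := huv
      obtain ⟨g, hg, hw⟩ := ihe _ hu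
      exact ⟨g * f, Or.inl ⟨g, hg, rfl⟩, by
        rw [RegularExpression.matches'_mul, Language.mem_mul]; exact ⟨u, hw, v, hv, rfl⟩⟩
  | star e ihe =>
    rw [RegularExpression.matches'_star] at h
    obtain ⟨u, v, hu, hv, rfl⟩ := star_cons h
    obtain ⟨g, hg, hw⟩ := ihe _ hu
    exact ⟨g * e.star, ⟨g, hg, rfl⟩, by
      rw [RegularExpression.matches'_mul, Language.mem_mul]
      exact ⟨u, hw, v, by rwa [RegularExpression.matches'_star], rfl⟩⟩

lemma ini_sound {α : Type*} (e : RegularExpression α) (w : List α)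
    (h : w ∈ e.matches') : ∃ g ∈ ini e, w ∈ g.matches' := by
  induction e generalizing w with
  | zero => simp [RegularExpression.matches'] at h
  | epsilon => exact ⟨1, rfl, h⟩
  | char b => exact ⟨RegularExpression.char b, rfl, h⟩
  | plus e f ihe ihf =>
    rcases (show w ∈ e.matches' ∨ w ∈ f.matches' from h) with h | h
    · obtain ⟨g, hg, hw⟩ := ihe _ h
      exact ⟨g, Or.inl hg, hw⟩
    · obtain ⟨g, hg, hw⟩ := ihf _ h
      exact ⟨g, Or.inr hg, hw⟩
  | comp e f ihe ihf =>
    rw [RegularExpression.comp_def, RegularExpression.matches'_mul, Language.mem_mul] at h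
    obtain ⟨u, hu, v, hv, rfl⟩ := h
    obtain ⟨g, hg, hw⟩ := ihe _ hu
    exact ⟨g * f, ⟨g, hg, rfl⟩, by
      rw [RegularExpression.matches'_mul, Language.mem_mul]; exact ⟨u, hw, v, hv, rfl⟩⟩
  | star e ihe =>
    rw [RegularExpression.matches'_star] at h
    rcases w with _ | ⟨a, w⟩
    · exact ⟨1, Or.inr rfl, by simp [RegularExpression.matches']⟩
    · obtain ⟨u, v, hu, hv, rfl⟩ := star_cons h
      obtain ⟨g, hg, hw⟩ := ihe _ hu
      exact ⟨g * e.star, Or.inl ⟨g, hg, rfl⟩, by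
        rw [RegularExpression.matches'_mul, Language.mem_mul]
        exact ⟨a :: u, hw, v, by rwa [RegularExpression.matches'_star], rfl⟩⟩

lemma evalFrom_sound {α : Type*} (e : RegularExpression α) (w : List α) :
    ∀ (S : Set (RegularExpression α)), (∃ g ∈ S, w ∈ g.matches') →
    ∃ g ∈ (antimirovNFA e).evalFrom S w, [] ∈ g.matches' := by
  induction w with
  | nil => intro S ⟨g, hg, hw⟩; exact ⟨g, hg, hw⟩
  | cons a w ih =>
    rintro S ⟨g, hg, hw⟩
    obtain ⟨g', hg', hw'⟩ := aderiv_sound g a w hw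
    exact ih _ ⟨g', Set.mem_iUnion₂.2 ⟨g, hg, hg'⟩, hw'⟩

/-- One half of the correctness of Antimirov's construction: the language of `e` is contained
in the language accepted by its Antimirov automaton. -/
theorem antimirov_accepts {α : Type*} (e : RegularExpression α) (w : List α)
    (hw : w ∈ e.matches') : w ∈ (antimirovNFA e).accepts := by
  obtain ⟨g, hg, h0⟩ := evalFrom_sound e w (ini e) (ini_sound e w hw)
  exact ⟨g, h0, hg⟩
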